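/- Let D = conv{0, e₁, e₂, e₃} ⊆ ℝ³ be the standard tetrahedron. For every vector t ∈ {0,1}³ \ {0}, there exist two distinct vertices p, q of D and a nonzero vector v in the lattice ℤ³ + ℤ·(t/2) such that the midpoint (p+q)/2 of the edge pq belongs to the translate D + v. -/

import Mathlib

open Pointwise MeasureTheory

/-- The standard basis vector `eᵢ` of `ℝ³`. -/
noncomputable def stdVec (i : Fin 3) : EuclideanSpace ℝ (Fin 3) :=
  EuclideanSpace.single i (1 : ℝ)

/-- The standard tetrahedron `conv {0, e₁, e₂, e₃} ⊆ ℝ³`. -/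
noncomputable def stdTetrahedron : Set (EuclideanSpace ℝ (Fin 3)) :=
  convexHull ℝ {0, stdVec 0, stdVec 1, stdVec 2}

/-- The standard integer lattice `ℤ³ ⊆ ℝ³`, i.e. the `ℤ`-span of the standard basis. -/
noncomputable def intLattice : Submodule ℤ (EuclideanSpace ℝ (Fin 3)) :=
  Submodule.span ℤ (Set.range stdVec)

/-- The lattice `ℤ³ + ℤ·(t/2)` generated by `ℤ³` together with the vector `t/2`. -/
noncomputable def halfLattice (t : EuclideanSpace ℝ (Fin 3)) :
    Submodule ℤ (EuclideanSpace ℝ (Fin 3)) :=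
  intLattice ⊔ Submodule.span ℤ {(1 / 2 : ℝ) • t}

lemma half_t_mem (t : EuclideanSpace ℝ (Fin 3)) : (1 / 2 : ℝ) • t ∈ halfLattice t :=
  Submodule.mem_sup_right (Submodule.mem_span_singleton_self _)

lemma stdVec_mem (t : EuclideanSpace ℝ (Fin 3)) (i : Fin 3) : stdVec i ∈ halfLattice t :=
  Submodule.mem_sup_left (Submodule.subset_span ⟨i, rfl⟩)

lemma zero_mem_tet : (0 : EuclideanSpace ℝ (Fin 3)) ∈ stdTetrahedron :=
  subset_convexHull ℝ _ (by simp)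

lemma half_e_mem_tet (i : Fin 3) : (1 / 2 : ℝ) • stdVec i ∈ stdTetrahedron := by
  have h0 : (0 : EuclideanSpace ℝ (Fin 3)) ∈ stdTetrahedron := zero_mem_tet
  have hi : stdVec i ∈ stdTetrahedron := by
    apply subset_convexHull ℝ _
    fin_cases i <;> simp
  have := (convex_convexHull ℝ ({0, stdVec 0, stdVec 1, stdVec 2} : Set (EuclideanSpace ℝ (Fin 3)))) h0 hi (by norm_num : (0:ℝ) ≤ 1/2) (by norm_num : (0:ℝ) ≤ 1/2) (by norm_num)
  simpa [stdTetrahedron] using this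

lemma stdVec_apply (i j : Fin 3) : stdVec i j = if j = i then 1 else 0 := by
  simp [stdVec, EuclideanSpace.single_apply]

/-- For every `t ∈ {0,1}³ \ {0}`, some edge midpoint `(p+q)/2` of the standard tetrahedron
`D = conv {0, e₁, e₂, e₃}` belongs to a translate `D + v` of `D` by a nonzero vector `v` of
the lattice `ℤ³ + ℤ·(t/2)`. -/
theorem stmt_17 (t : EuclideanSpace ℝ (Fin 3))
    (ht01 : ∀ i, t i = 0 ∨ t i = 1) (ht0 : t ≠ 0) :
    ∃ p ∈ ({0, stdVec 0, stdVec 1, stdVec 2} : Set (EuclideanSpace ℝ (Fin 3))),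
      ∃ q ∈ ({0, stdVec 0, stdVec 1, stdVec 2} : Set (EuclideanSpace ℝ (Fin 3))),
        p ≠ q ∧ ∃ v ∈ halfLattice t, v ≠ 0 ∧
          (1 / 2 : ℝ) • (p + q) ∈ v +ᵥ stdTetrahedron := by
  have hne : ∀ i : Fin 3, (0:EuclideanSpace ℝ (Fin 3)) ≠ stdVec i := by
    intro i h
    have := congrFun (congrArg (fun f : EuclideanSpace ℝ (Fin 3) => (f : Fin 3 → ℝ)) h) i
    simp [stdVec_apply] at this
  have hne2 : ∀ i j : Fin 3, i ≠ j → stdVec i ≠ stdVec j := by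
    intro i j hij h
    have := congrFun (congrArg (fun f : EuclideanSpace ℝ (Fin 3) => (f : Fin 3 → ℝ)) h) i
    simp [stdVec_apply, hij, (Ne.symm hij)] at this
  have hvne : ∀ i : Fin 3, t i = 1 → (1/2 : ℝ) • t ≠ 0 := by
    intro i hi h
    have := congrFun (congrArg (fun f : EuclideanSpace ℝ (Fin 3) => (f : Fin 3 → ℝ)) h) i
    simp [PiLp.smul_apply, hi] at this
  rcases ht01 0 with h0 | h0 <;> rcases ht01 1 with h1 | h1 <;> rcases ht01 2 with h2 | h2
  · exact absurd (by ext i; fin_cases i <;> simpa) ht0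
  · -- t = e₂ (index 2)
    have ht : t = stdVec 2 := by ext i; fin_cases i <;> simp [stdVec_apply, h0, h1, h2]
    refine ⟨0, by simp, stdVec 2, by simp, hne 2, (1/2:ℝ) • t, half_t_mem t, hvne 2 h2, ?_⟩
    have : (1/2:ℝ) • ((0:EuclideanSpace ℝ (Fin 3)) + stdVec 2) = (1/2:ℝ) • t + 0 := by
      rw [ht]; module
    rw [this]
    exact Set.vadd_mem_vadd_set zero_mem_tet
  · have ht : t = stdVec 1 := by ext i; fin_cases i <;> simp [stdVec_apply, h0, h1, h2]
    refine ⟨0, by simp, stdVec 1, by simp, hne 1, (1/2:ℝ) • t, half_t_mem t, hvne 1 h1, ?_⟩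
    have : (1/2:ℝ) • ((0:EuclideanSpace ℝ (Fin 3)) + stdVec 1) = (1/2:ℝ) • t + 0 := by
      rw [ht]; module
    rw [this]
    exact Set.vadd_mem_vadd_set zero_mem_tet
  · have ht : t = stdVec 1 + stdVec 2 := by
      ext i; fin_cases i <;> simp [stdVec_apply, h0, h1, h2]
    refine ⟨stdVec 1, by simp, stdVec 2, by simp, hne2 1 2 (by decide), (1/2:ℝ) • t,
      half_t_mem t, hvne 1 h1, ?_⟩
    have : (1/2:ℝ) • (stdVec 1 + stdVec 2) = (1/2:ℝ) • t + 0 := by rw [ht]; module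
    rw [this]
    exact Set.vadd_mem_vadd_set zero_mem_tet
  · have ht : t = stdVec 0 := by ext i; fin_cases i <;> simp [stdVec_apply, h0, h1, h2]
    refine ⟨0, by simp, stdVec 0, by simp, hne 0, (1/2:ℝ) • t, half_t_mem t, hvne 0 h0, ?_⟩
    have : (1/2:ℝ) • ((0:EuclideanSpace ℝ (Fin 3)) + stdVec 0) = (1/2:ℝ) • t + 0 := by
      rw [ht]; module
    rw [this]
    exact Set.vadd_mem_vadd_set zero_mem_tet
  · have ht : t = stdVec 0 + stdVec 2 := by
      ext i; fin_cases i <;> simp [stdVec_apply, h0, h1, h2]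
    refine ⟨stdVec 0, by simp, stdVec 2, by simp, hne2 0 2 (by decide), (1/2:ℝ) • t,
      half_t_mem t, hvne 0 h0, ?_⟩
    have : (1/2:ℝ) • (stdVec 0 + stdVec 2) = (1/2:ℝ) • t + 0 := by rw [ht]; module
    rw [this]
    exact Set.vadd_mem_vadd_set zero_mem_tet
  · have ht : t = stdVec 0 + stdVec 1 := by
      ext i; fin_cases i <;> simp [stdVec_apply, h0, h1, h2]
    refine ⟨stdVec 0, by simp, stdVec 1, by simp, hne2 0 1 (by decide), (1/2:ℝ) • t,
      half_t_mem t, hvne 0 h0, ?_⟩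
    have : (1/2:ℝ) • (stdVec 0 + stdVec 1) = (1/2:ℝ) • t + 0 := by rw [ht]; module
    rw [this]
    exact Set.vadd_mem_vadd_set zero_mem_tet
  · -- t = e₀ + e₁ + e₂
    have ht : t = stdVec 0 + stdVec 1 + stdVec 2 := by
      ext i; fin_cases i <;> simp [stdVec_apply, h0, h1, h2]
    refine ⟨stdVec 0, by simp, stdVec 1, by simp, hne2 0 1 (by decide),
      (1/2:ℝ) • t - stdVec 2, sub_mem (half_t_mem t) (stdVec_mem t 2), ?_, ?_⟩
    · intro h
      have := congrFun (congrArg (fun f : EuclideanSpace ℝ (Fin 3) => (f : Fin 3 → ℝ)) h) 0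
      simp [PiLp.smul_apply, PiLp.sub_apply, h0, stdVec_apply] at this
    · have : (1/2:ℝ) • (stdVec 0 + stdVec 1)
          = ((1/2:ℝ) • t - stdVec 2) + (1/2:ℝ) • stdVec 2 := by rw [ht]; module
      rw [this]
      exact Set.vadd_mem_vadd_set (half_e_mem_tet 2)
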